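/- Let G be a finite connected simple graph with coupling constants L : E(G) → ℝ. Then Σ_{σ : V(G) → {-1,1}} exp(Σ_{{x,y} ∈ E(G)} L_{{x,y}} σ_x σ_y) = 2 · (∏_{e ∈ E(G)} e^{L_e}) · Σ_{S ∈ 𝒞(G)} ∏_{e ∈ S} e^{−2 L_e}, where 𝒞(G) = { δ(A) : A ⊆ V(G) } is the collection of cut sets of G. (The low-temperature expansion, the content of Lemma 3.6: spin configurations correspond two-to-one to their disagreement edge sets, which for a connected graph are exactly the cuts.) -/

import Mathlib

open Finset

/-- The product of the spins at the two endpoints of an edge, as a real number. -/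
def spinProd {V : Type} (σ : V → ℤˣ) : Sym2 V → ℝ :=
  Sym2.lift ⟨fun x y => ((σ x : ℤ) : ℝ) * ((σ y : ℤ) : ℝ), fun x y => by ring⟩

/-- The unordered pair `e` has exactly one endpoint in `A`. -/
def oneEndIn {V : Type} [DecidableEq V] (A : Finset V) : Sym2 V → Prop :=
  Sym2.lift ⟨fun x y => Xor' (x ∈ A) (y ∈ A), fun x y => propext (by unfold Xor' Xor; tauto)⟩

/-- The cut `δ(A)` determined by a vertex set `A`: the set of edges of `G` with exactly
one endpoint in `A`. -/
noncomputable def cutSet {V : Type} [Fintype V] [DecidableEq V] (G : SimpleGraph V)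
    [DecidableRel G.Adj] (A : Finset V) : Finset (Sym2 V) :=
  @Finset.filter _ (fun e => oneEndIn A e) (Classical.decPred _) G.edgeFinset

/-- The collection `𝒞(G)` of cut sets of `G`, each counted once. -/
noncomputable def cutSets {V : Type} [Fintype V] [DecidableEq V] (G : SimpleGraph V)
    [DecidableRel G.Adj] : Finset (Finset (Sym2 V)) :=
  (Finset.univ : Finset (Finset V)).image (cutSet G)

section Aux

variable {V : Type} [Fintype V] [DecidableEq V]

lemma oneEndIn_mk (A : Finset V) (x y : V) :
    oneEndIn A s(x, y) ↔ Xor' (x ∈ A) (y ∈ A) := Iff.rfl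

lemma spinProd_mk (σ : V → ℤˣ) (x y : V) :
    spinProd σ s(x, y) = ((σ x : ℤ) : ℝ) * ((σ y : ℤ) : ℝ) := rfl

/-- The vertex set of `-1` spins. -/
noncomputable def toA (σ : V → ℤˣ) : Finset V := univ.filter (fun v => σ v = -1)

lemma mem_toA (σ : V → ℤˣ) (v : V) : v ∈ toA σ ↔ σ v = -1 := by simp [toA]

lemma mem_cutSet (G : SimpleGraph V) [DecidableRel G.Adj] (A : Finset V) (e : Sym2 V) :
    e ∈ cutSet G A ↔ e ∈ G.edgeFinset ∧ oneEndIn A e := by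
  classical
  simp [cutSet, Finset.mem_filter]

lemma spinProd_one (σ : V → ℤˣ) (x y : V) (h : ¬ Xor' (σ x = -1) (σ y = -1)) :
    spinProd σ s(x, y) = 1 := by
  rcases Int.units_eq_one_or (σ x) with hx | hx <;>
    rcases Int.units_eq_one_or (σ y) with hy | hy <;>
    simp [spinProd_mk, hx, hy, Xor'] at h ⊢

lemma spinProd_neg_one (σ : V → ℤˣ) (x y : V) (h : Xor' (σ x = -1) (σ y = -1)) :
    spinProd σ s(x, y) = -1 := by
  rcases Int.units_eq_one_or (σ x) with hx | hx <;>
    rcases Int.units_eq_one_or (σ y) with hy | hy <;>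
    simp [spinProd_mk, hx, hy, Xor'] at h ⊢

lemma walk_iff (G : SimpleGraph V) {P : V → Prop}
    (h : ∀ x y, G.Adj x y → (P x ↔ P y)) {u v : V} (hr : G.Reachable u v) :
    P u ↔ P v := by
  obtain ⟨w⟩ := hr
  induction w with
  | nil => exact Iff.rfl
  | cons hadj _ ih => exact (h _ _ hadj).trans ih

lemma cutSet_compl (G : SimpleGraph V) [DecidableRel G.Adj] (A : Finset V) :
    cutSet G Aᶜ = cutSet G A := by
  ext e
  induction e using Sym2.ind with
  | _ x y =>
    simp only [mem_cutSet, oneEndIn_mk, Finset.mem_compl, Xor', Xor]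
    tauto

lemma cutSet_eq (G : SimpleGraph V) [DecidableRel G.Adj] (hconn : G.Connected)
    {A B : Finset V} (h : cutSet G A = cutSet G B) : B = A ∨ B = Aᶜ := by
  have hedge : ∀ x y, G.Adj x y →
      ((x ∈ A ↔ x ∈ B) ↔ (y ∈ A ↔ y ∈ B)) := by
    intro x y hxy
    have h2 := Finset.ext_iff.mp h s(x, y)
    simp only [mem_cutSet, oneEndIn_mk, SimpleGraph.mem_edgeFinset,
      SimpleGraph.mem_edgeSet, hxy, true_and, Xor', Xor] at h2
    tauto
  obtain ⟨v0⟩ := hconn.nonempty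
  by_cases h0 : (v0 ∈ A ↔ v0 ∈ B)
  · left
    ext v
    have := walk_iff G hedge (hconn v0 v)
    tauto
  · right
    ext v
    rw [Finset.mem_compl]
    have := walk_iff G hedge (hconn v0 v)
    tauto

lemma fiber_eq (G : SimpleGraph V) [DecidableRel G.Adj] (hconn : G.Connected)
    (A : Finset V) :
    (univ.filter fun B => cutSet G B = cutSet G A) = {A, Aᶜ} := by
  ext B
  simp only [Finset.mem_filter, Finset.mem_univ, true_and, Finset.mem_insert,
    Finset.mem_singleton]
  constructor
  · intro h
    exact cutSet_eq G hconn h.symm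
  · rintro (rfl | rfl)
    · rfl
    · exact cutSet_compl G A

lemma compl_ne (hV : Nonempty V) (A : Finset V) : A ≠ Aᶜ := by
  obtain ⟨v⟩ := hV
  intro h
  by_cases hv : v ∈ A
  · have := hv
    rw [h, Finset.mem_compl] at this
    exact this hv
  · have : v ∈ Aᶜ := Finset.mem_compl.mpr hv
    rw [← h] at this
    exact hv this

/-- The equivalence between spin configurations and vertex subsets. -/
noncomputable def spinEquiv : (V → ℤˣ) ≃ Finset V where
  toFun := toA
  invFun A := fun v => if v ∈ A then -1 else 1
  left_inv σ := by
    funext v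
    rcases Int.units_eq_one_or (σ v) with h | h <;> simp [mem_toA, h]
  right_inv A := by
    ext v
    by_cases hv : v ∈ A <;> simp [mem_toA, hv]

end Aux

/-- The low-temperature expansion (Lemma 3.6): for a finite connected simple graph, the
Ising partition function equals `2 · ∏_e e^{L_e} · Σ_{S ∈ 𝒞(G)} ∏_{e ∈ S} e^{−2L_e}`,
the sum running over all cut sets of `G`. -/
theorem ising_low_temperature_expansion {V : Type} [Fintype V] [DecidableEq V]
    (G : SimpleGraph V) [DecidableRel G.Adj] (hconn : G.Connected) (L : Sym2 V → ℝ) :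
    ∑ σ : V → ℤˣ, Real.exp (∑ e ∈ G.edgeFinset, L e * spinProd σ e) =
      2 * (∏ e ∈ G.edgeFinset, Real.exp (L e)) *
        ∑ S ∈ cutSets G, ∏ e ∈ S, Real.exp (-2 * L e) := by
  classical
  -- Step 1: pointwise rewriting of the exponent
  have step1 : ∀ σ : V → ℤˣ,
      Real.exp (∑ e ∈ G.edgeFinset, L e * spinProd σ e) =
        (∏ e ∈ G.edgeFinset, Real.exp (L e)) *
          ∏ e ∈ cutSet G (toA σ), Real.exp (-2 * L e) := by
    intro σ
    have hsub : cutSet G (toA σ) ⊆ G.edgeFinset := by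
      intro e he
      exact ((mem_cutSet G _ e).mp he).1
    have hsum : ∑ e ∈ G.edgeFinset, L e * spinProd σ e =
        (∑ e ∈ G.edgeFinset, L e) + ∑ e ∈ cutSet G (toA σ), (-2 * L e) := by
      have key : ∑ e ∈ cutSet G (toA σ), (L e * spinProd σ e - L e) =
          ∑ e ∈ G.edgeFinset, (L e * spinProd σ e - L e) := by
        apply Finset.sum_subset hsub
        intro e he hne
        induction e using Sym2.ind with
        | _ x y =>
          have hno : ¬ oneEndIn (toA σ) s(x, y) := fun hc =>
            hne ((mem_cutSet G _ _).mpr ⟨he, hc⟩)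
          rw [oneEndIn_mk] at hno
          simp only [mem_toA] at hno
          rw [spinProd_one σ x y hno]
          ring
      have key2 : ∀ e ∈ cutSet G (toA σ), L e * spinProd σ e - L e = -2 * L e := by
        intro e he
        induction e using Sym2.ind with
        | _ x y =>
          have hc := ((mem_cutSet G _ _).mp he).2
          rw [oneEndIn_mk] at hc
          simp only [mem_toA] at hc
          rw [spinProd_neg_one σ x y hc]
          ring
      calc ∑ e ∈ G.edgeFinset, L e * spinProd σ e
          = (∑ e ∈ G.edgeFinset, L e) +
            ∑ e ∈ G.edgeFinset, (L e * spinProd σ e - L e) := by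
            rw [← Finset.sum_add_distrib]; apply Finset.sum_congr rfl; intros; ring
        _ = (∑ e ∈ G.edgeFinset, L e) + ∑ e ∈ cutSet G (toA σ), (-2 * L e) := by
            rw [← key, Finset.sum_congr rfl key2]
    rw [hsum, Real.exp_add, Real.exp_sum, Real.exp_sum]
  rw [Finset.sum_congr rfl fun σ _ => step1 σ, ← Finset.mul_sum]
  -- Step 2: reindex over subsets
  have step2 : ∑ σ : V → ℤˣ, ∏ e ∈ cutSet G (toA σ), Real.exp (-2 * L e) =
      ∑ A : Finset V, ∏ e ∈ cutSet G A, Real.exp (-2 * L e) := by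
    exact Equiv.sum_comp spinEquiv (fun A => ∏ e ∈ cutSet G A, Real.exp (-2 * L e))
  rw [step2]
  -- Step 3: group by cut sets
  have step3 : ∑ A : Finset V, ∏ e ∈ cutSet G A, Real.exp (-2 * L e) =
      2 * ∑ S ∈ cutSets G, ∏ e ∈ S, Real.exp (-2 * L e) := by
    rw [Finset.sum_comp (fun S => ∏ e ∈ S, Real.exp (-2 * L e)) (cutSet G)]
    rw [Finset.mul_sum]
    unfold cutSets
    apply Finset.sum_congr rfl
    intro S hS
    obtain ⟨A, _, rfl⟩ := Finset.mem_image.mp hS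
    rw [fiber_eq G hconn A, Finset.card_pair (compl_ne hconn.nonempty A)]
    simp [two_smul]; ring
  rw [step3]
  ring
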